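/- Let A and B be finitely generated groups with finite symmetric generating sets S_A and S_B. For every element g = (f,x) of the wreath product A ≀ B, the word length with respect to the standard generating set S_std = S_A ∪ S_B satisfies ‖g‖_{S_std} = Σ_{y ∈ supp(f)} ‖f(y)‖_{S_A} + TS(e_B, x; supp(f)), where supp(f) = {y ∈ B : f(y) ≠ e_A}. -/

import Mathlib

open scoped Classical

/-- The word length of `g` with respect to a generating set `S`: the least `n` such that
`g` is a product of `n` elements of `S`. -/
noncomputable def wordLength {G : Type*} [Group G] (S : Set G) (g : G) : ℕ :=
  sInf {n | ∃ l : List G, (∀ x ∈ l, x ∈ S) ∧ l.length = n ∧ l.prod = g}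

/-- `g` has depth at least `n` with respect to `S`: multiplying `g` by between `1` and `n`
generators of `S` never increases word length. -/
def HasDepthAtLeast {G : Type*} [Group G] (S : Set G) (g : G) (n : ℕ) : Prop :=
  ∀ l : List G, (∀ x ∈ l, x ∈ S) → 1 ≤ l.length → l.length ≤ n →
    wordLength S (g * l.prod) ≤ wordLength S g

/-- `(G, S)` has unbounded depth: for every `n` there is an element of depth at least `n`. -/
def UnboundedDepth {G : Type*} [Group G] (S : Set G) : Prop :=
  ∀ n : ℕ, ∃ g : G, HasDepthAtLeast S g n

/-- `S` is a finite symmetric generating set of `G`. -/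
structure IsSymmGen {G : Type*} [Group G] (S : Set G) : Prop where
  finite : S.Finite
  symm : ∀ s ∈ S, s⁻¹ ∈ S
  closure_eq_top : Subgroup.closure S = ⊤

/-- The Cayley graph of `G` with respect to `S`: an edge between `g` and `g * s` for
each `s ∈ S`. -/
def cayley {G : Type*} [Group G] (S : Set G) : SimpleGraph G :=
  SimpleGraph.fromRel (fun x y => ∃ s ∈ S, y = x * s)

/-- `TS S b b' F`: the minimal number of edges of a walk in the Cayley graph `Cay(G, S)`
from `b` to `b'` that visits every element of `F` (`0` if no such walk exists). -/
noncomputable def TS {G : Type*} [Group G] (S : Set G) (b b' : G) (F : Set G) : ℕ :=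
  sInf {n | ∃ w : (cayley S).Walk b b', (∀ x ∈ F, x ∈ w.support) ∧ w.length = n}

/-- The group of finitely supported functions `B → A`, as a subgroup of the direct
product `B → A`. -/
def FinSuppSubgroup (A B : Type*) [Group A] : Subgroup (B → A) where
  carrier := {f | (Function.mulSupport f).Finite}
  one_mem' := by
    simp [Function.mulSupport_one]
  mul_mem' := by
    intro f g hf hg
    exact Set.Finite.subset (hf.union hg) (Function.mulSupport_mul f g)
  inv_mem' := by
    intro f hf
    simpa [Function.mulSupport_inv] using hf

/-- Left translation by `b ∈ B` on finitely supported functions: `(b · f) x = f (b⁻¹ x)`. -/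
def lampTranslate (A B : Type*) [Group A] [Group B] (b : B) :
    FinSuppSubgroup A B ≃* FinSuppSubgroup A B where
  toFun f := ⟨fun x => (f : B → A) (b⁻¹ * x), by
    have h : Function.mulSupport (fun x => (f : B → A) (b⁻¹ * x)) ⊆
        (fun x : B => b⁻¹ * x) ⁻¹' Function.mulSupport (f : B → A) := fun x hx => hx
    exact Set.Finite.subset
      (Set.Finite.preimage (Set.injOn_of_injective (mul_right_injective b⁻¹)) f.2) h⟩
  invFun f := ⟨fun x => (f : B → A) (b * x), by
    have h : Function.mulSupport (fun x => (f : B → A) (b * x)) ⊆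
        (fun x : B => b * x) ⁻¹' Function.mulSupport (f : B → A) := fun x hx => hx
    exact Set.Finite.subset
      (Set.Finite.preimage (Set.injOn_of_injective (mul_right_injective b)) f.2) h⟩
  left_inv f := Subtype.ext (funext fun x => by simp)
  right_inv f := Subtype.ext (funext fun x => by simp)
  map_mul' f g := rfl

/-- The action of `B` on finitely supported functions `B → A` by left translation. -/
def lampAction (A B : Type*) [Group A] [Group B] :
    B →* MulAut (FinSuppSubgroup A B) where
  toFun := lampTranslate A B
  map_one' := by
    apply MulEquiv.ext
    intro f
    apply Subtype.ext
    funext x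
    show (f : B → A) ((1 : B)⁻¹ * x) = (f : B → A) x
    simp
  map_mul' b c := by
    apply MulEquiv.ext
    intro f
    apply Subtype.ext
    funext x
    show (f : B → A) ((b * c)⁻¹ * x) = (f : B → A) (c⁻¹ * (b⁻¹ * x))
    rw [mul_inv_rev, mul_assoc]

/-- The restricted wreath product `A ≀ B`, i.e. the semidirect product
`(⨁_B A) ⋊ B` where `B` acts by left translation. -/
abbrev Wreath (A B : Type*) [Group A] [Group B] :=
  FinSuppSubgroup A B ⋊[lampAction A B] B

/-- `δ_a`: the finitely supported function sending `1 ∈ B` to `a` and everything else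
to `1 ∈ A`. -/
noncomputable def lampSingle (A B : Type*) [Group A] [Group B] (a : A) :
    FinSuppSubgroup A B :=
  ⟨fun x => if x = (1 : B) then a else 1, by
    apply Set.Finite.subset (Set.finite_singleton (1 : B))
    intro x hx
    simp only [Set.mem_singleton_iff]
    by_contra h
    exact hx (if_neg h)⟩

/-- The standard generating set `S_A ∪ S_B` of the wreath product `A ≀ B`, where
`a ∈ S_A` is identified with `(δ_a, 1)` and `b ∈ S_B` with `(𝟙, b)`. -/
noncomputable def stdGen {A B : Type*} [Group A] [Group B] (SA : Set A) (SB : Set B) :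
    Set (Wreath A B) :=
  ((fun a => SemidirectProduct.inl (lampSingle A B a)) '' SA) ∪
    ((fun b => SemidirectProduct.inr b) '' SB)

lemma finSupp_finite {A B : Type*} [Group A] (f : FinSuppSubgroup A B) :
    (Function.mulSupport (f : B → A)).Finite := f.2
section WordLen
variable {G : Type*} [Group G] {S : Set G}

lemma wordLength_le (l : List G) (hl : ∀ x ∈ l, x ∈ S) {g : G} (hp : l.prod = g) :
    wordLength S g ≤ l.length :=
  Nat.sInf_le ⟨l, hl, rfl, hp⟩

lemma wordLength_one (S : Set G) : wordLength S (1 : G) = 0 :=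
  Nat.le_zero.mp (wordLength_le [] (by simp) (by simp))

lemma exists_word (hS : IsSymmGen S) (g : G) :
    ∃ l : List G, (∀ x ∈ l, x ∈ S) ∧ l.prod = g := by
  have hg : g ∈ Submonoid.closure (S ∪ S⁻¹) := by
    rw [← Subgroup.closure_toSubmonoid, hS.closure_eq_top]; trivial
  obtain ⟨l, hl, hp⟩ := Submonoid.exists_list_of_mem_closure hg
  refine ⟨l, fun x hx => ?_, hp⟩
  rcases hl x hx with h | h
  · exact h
  · simpa using hS.symm _ h

lemma exists_min_word (hS : IsSymmGen S) (g : G) :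
    ∃ l : List G, (∀ x ∈ l, x ∈ S) ∧ l.length = wordLength S g ∧ l.prod = g := by
  have hne : {n | ∃ l : List G, (∀ x ∈ l, x ∈ S) ∧ l.length = n ∧ l.prod = g}.Nonempty := by
    obtain ⟨l, hl, hp⟩ := exists_word hS g
    exact ⟨l.length, l, hl, rfl, hp⟩
  exact Nat.sInf_mem hne

lemma wordLength_mul_le (hS : IsSymmGen S) (g h : G) :
    wordLength S (g * h) ≤ wordLength S g + wordLength S h := by
  obtain ⟨l1, hl1, hlen1, hp1⟩ := exists_min_word hS g
  obtain ⟨l2, hl2, hlen2, hp2⟩ := exists_min_word hS h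
  have hmem : ∀ x ∈ l1 ++ l2, x ∈ S := by
    intro x hx
    rcases List.mem_append.mp hx with h | h
    exacts [hl1 x h, hl2 x h]
  have := wordLength_le (l1 ++ l2) hmem (g := g * h) (by rw [List.prod_append, hp1, hp2])
  simpa [hlen1, hlen2] using this

lemma wordLength_le_one {s : G} (hs : s ∈ S) : wordLength S s ≤ 1 := by
  simpa using wordLength_le [s] (by simpa using hs) (by simp)

end WordLen
section Cayley
variable {G : Type*} [Group G] {S : Set G}

lemma cayley_adj_of {u : G} {s : G} (hs : s ∈ S) (hne : u ≠ u * s) :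
    (cayley S).Adj u (u * s) :=
  ⟨hne, Or.inl ⟨s, hs, rfl⟩⟩

lemma cayley_adj_iff (hS : IsSymmGen S) {u v : G} :
    (cayley S).Adj u v ↔ u ≠ v ∧ ∃ s ∈ S, v = u * s := by
  constructor
  · rintro ⟨hne, h | h⟩
    · exact ⟨hne, h⟩
    · obtain ⟨s, hs, hu⟩ := h
      refine ⟨hne, s⁻¹, hS.symm s hs, ?_⟩
      rw [hu, mul_assoc, mul_inv_cancel, mul_one]
  · rintro ⟨hne, s, hs, rfl⟩
    exact ⟨hne, Or.inl ⟨s, hs, rfl⟩⟩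

/-- Left translation as an automorphism of the Cayley graph. -/
def cayleyMulLeft (S : Set G) (b : G) : cayley S ≃g cayley S where
  toEquiv := Equiv.mulLeft b
  map_rel_iff' := by
    intro u v
    show (cayley S).Adj (b * u) (b * v) ↔ (cayley S).Adj u v
    have key : ∀ x y : G, (∃ s ∈ S, b * y = b * x * s) ↔ ∃ s ∈ S, y = x * s := by
      intro x y
      constructor
      · rintro ⟨s, hs, h⟩
        rw [mul_assoc] at h
        exact ⟨s, hs, mul_left_cancel h⟩
      · rintro ⟨s, hs, rfl⟩
        exact ⟨s, hs, by rw [mul_assoc]⟩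
    constructor
    · rintro ⟨hne, h | h⟩
      · exact ⟨fun e => hne (by rw [e]), Or.inl ((key u v).mp h)⟩
      · exact ⟨fun e => hne (by rw [e]), Or.inr ((key v u).mp h)⟩
    · rintro ⟨hne, h | h⟩
      · exact ⟨fun e => hne (mul_left_cancel e), Or.inl ((key u v).mpr h)⟩
      · exact ⟨fun e => hne (mul_left_cancel e), Or.inr ((key v u).mpr h)⟩

lemma cayley_reachable (hS : IsSymmGen S) (u v : G) : (cayley S).Reachable u v := by
  have h1 : ∀ w : G, (cayley S).Reachable 1 w := by
    intro w
    have hw : w ∈ Subgroup.closure S := by rw [hS.closure_eq_top]; trivial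
    induction hw using Subgroup.closure_induction with
    | mem s hs =>
      by_cases h : (1 : G) = s
      · rw [← h]
      · have h1 : (1 : G) ≠ 1 * s := by simpa using h
        have := (cayley_adj_of hs h1).reachable
        simpa using this
    | one => exact SimpleGraph.Reachable.refl 1
    | mul x y hx hy ihx ihy =>
      refine ihx.trans ?_
      have := ihy.map (cayleyMulLeft S x).toHom
      have h2 : (cayleyMulLeft S x).toHom (1:G) = x := mul_one x
      have h3 : (cayleyMulLeft S x).toHom y = x * y := rfl
      rwa [h2, h3] at this
    | inv x hx ihx =>
      have := ihx.map (cayleyMulLeft S x⁻¹).toHom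
      have h2 : (cayleyMulLeft S x⁻¹).toHom (1:G) = x⁻¹ := mul_one x⁻¹
      have h3 : (cayleyMulLeft S x⁻¹).toHom x = x⁻¹ * x := rfl
      rw [h2, h3, inv_mul_cancel] at this
      exact this.symm
  exact (h1 u).symm.trans (h1 v)

lemma exists_walk_visiting (hS : IsSymmGen S) (L : List G) (u v : G) :
    ∃ w : (cayley S).Walk u v, ∀ y ∈ L, y ∈ w.support := by
  induction L generalizing u with
  | nil => exact ⟨(cayley_reachable hS u v).some, by simp⟩
  | cons a L ih =>
    obtain ⟨w1⟩ := cayley_reachable hS u a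
    obtain ⟨w2, hw2⟩ := ih a
    refine ⟨w1.append w2, ?_⟩
    intro y hy
    rcases List.mem_cons.mp hy with rfl | hy
    · exact (SimpleGraph.Walk.mem_support_append_iff _ _).mpr (Or.inl w1.end_mem_support)
    · exact (SimpleGraph.Walk.mem_support_append_iff _ _).mpr (Or.inr (hw2 y hy))

end Cayley
section WreathAux
variable {A B : Type*} [Group A] [Group B]

lemma lampAction_apply (b : B) (f : FinSuppSubgroup A B) (y : B) :
    ((lampAction A B b f : FinSuppSubgroup A B) : B → A) y = (f : B → A) (b⁻¹ * y) := rfl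

lemma finSupp_coe_mul (f g : FinSuppSubgroup A B) (y : B) :
    ((f * g : FinSuppSubgroup A B) : B → A) y = (f : B → A) y * (g : B → A) y := rfl

lemma lampSingle_apply (a : A) (y : B) :
    ((lampSingle A B a : FinSuppSubgroup A B) : B → A) y = if y = 1 then a else 1 := rfl

lemma lampAction_one_apply (f : FinSuppSubgroup A B) :
    lampAction A B (1 : B) f = f := by
  rw [map_one (lampAction A B)]
  rfl

/-- `a ↦ (δ_a, 1)` as a monoid hom. -/
noncomputable def singleHom (A B : Type*) [Group A] [Group B] : A →* Wreath A B where
  toFun a := SemidirectProduct.inl (lampSingle A B a)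
  map_one' := by
    show SemidirectProduct.inl (lampSingle A B 1) = 1
    rw [← map_one (SemidirectProduct.inl (φ := lampAction A B))]
    congr 1
    apply Subtype.ext
    funext y
    simp [lampSingle]
  map_mul' a a' := by
    show SemidirectProduct.inl (lampSingle A B (a * a')) =
      SemidirectProduct.inl (lampSingle A B a) * SemidirectProduct.inl (lampSingle A B a')
    rw [← map_mul]
    congr 1
    apply Subtype.ext
    funext y
    by_cases h : y = (1:B) <;> simp [lampSingle, finSupp_coe_mul, h]

variable (SA : Set A)

/-- Sum of lamp word lengths. -/
noncomputable def sumLen (f : FinSuppSubgroup A B) : ℕ :=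
  ∑ y ∈ (finSupp_finite f).toFinset, wordLength SA ((f : B → A) y)

lemma sumLen_eq_sum (f : FinSuppSubgroup A B) (F : Finset B)
    (hF : Function.mulSupport (f : B → A) ⊆ F) :
    sumLen SA f = ∑ y ∈ F, wordLength SA ((f : B → A) y) := by
  apply Finset.sum_subset
  · intro y hy
    exact hF ((finSupp_finite f).mem_toFinset.mp hy)
  · intro y _ hy
    have : (f : B → A) y = 1 := by
      by_contra h
      exact hy ((finSupp_finite f).mem_toFinset.mpr h)
    rw [this, wordLength_one]

lemma sumLen_one : sumLen SA (1 : FinSuppSubgroup A B) = 0 := by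
  rw [sumLen_eq_sum SA 1 ∅ (by simp)]
  simp

lemma sumLen_translate (b : B) (f : FinSuppSubgroup A B) :
    sumLen SA (lampAction A B b f) = sumLen SA f := by
  unfold sumLen
  apply Finset.sum_nbij' (fun y => b⁻¹ * y) (fun y => b * y)
  · intro y hy
    rw [Set.Finite.mem_toFinset] at hy ⊢
    simpa [lampAction_apply] using hy
  · intro y hy
    rw [Set.Finite.mem_toFinset] at hy ⊢
    simpa [Function.mem_mulSupport, lampAction_apply, inv_mul_cancel_left] using hy
  · intro y _; simp
  · intro y _; simp
  · intro y _
    rw [lampAction_apply]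

end WreathAux
section Core
variable {A B : Type*} [Group A] [Group B] {SA : Set A} {SB : Set B}

lemma sumLen_apart (f f' : FinSuppSubgroup A B) (b : B)
    (h : ∀ y, y ≠ b → (f : B → A) y = (f' : B → A) y) :
    sumLen SA f + wordLength SA ((f' : B → A) b) =
      sumLen SA f' + wordLength SA ((f : B → A) b) := by
  classical
  set F : Finset B := insert b ((finSupp_finite f).toFinset ∪ (finSupp_finite f').toFinset)
    with hF
  have hbF : b ∈ F := Finset.mem_insert_self _ _
  have hsub : Function.mulSupport (f : B → A) ⊆ F := by
    intro y hy
    exact Finset.mem_insert_of_mem (Finset.mem_union_left _ ((finSupp_finite f).mem_toFinset.mpr hy))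
  have hsub' : Function.mulSupport (f' : B → A) ⊆ F := by
    intro y hy
    exact Finset.mem_insert_of_mem (Finset.mem_union_right _ ((finSupp_finite f').mem_toFinset.mpr hy))
  have e1 : sumLen SA f = (∑ y ∈ F.erase b, wordLength SA ((f : B → A) y)) +
      wordLength SA ((f : B → A) b) := by
    rw [sumLen_eq_sum SA f F hsub, Finset.sum_erase_add _ _ hbF]
  have e2 : sumLen SA f' = (∑ y ∈ F.erase b, wordLength SA ((f' : B → A) y)) +
      wordLength SA ((f' : B → A) b) := by
    rw [sumLen_eq_sum SA f' F hsub', Finset.sum_erase_add _ _ hbF]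
  have e3 : (∑ y ∈ F.erase b, wordLength SA ((f : B → A) y)) =
      ∑ y ∈ F.erase b, wordLength SA ((f' : B → A) y) := by
    apply Finset.sum_congr rfl
    intro y hy
    rw [h y (Finset.mem_erase.mp hy).1]
  omega

lemma lower_core (hSA : IsSymmGen SA)
    (l : List (Wreath A B)) (hl : ∀ g ∈ l, g ∈ stdGen SA SB)
    (f : FinSuppSubgroup A B) (x : B) (hprod : l.prod = (⟨f, x⟩ : Wreath A B)) :
    ∃ w : (cayley SB).Walk 1 x,
      (∀ y ∈ Function.mulSupport ((f : FinSuppSubgroup A B) : B → A), y ∈ w.support) ∧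
        sumLen SA f + w.length ≤ l.length := by
  induction l generalizing f x with
  | nil =>
    rw [List.prod_nil] at hprod
    have hf : f = 1 := by
      have := congrArg SemidirectProduct.left hprod; simpa using this.symm
    have hx : x = 1 := by
      have := congrArg SemidirectProduct.right hprod; simpa using this.symm
    subst hx
    refine ⟨SimpleGraph.Walk.nil, ?_, ?_⟩
    · intro y hy
      rw [hf] at hy
      simp at hy
    · simp [hf, sumLen_one]
  | cons g t ih =>
    rw [List.prod_cons] at hprod
    set f' : FinSuppSubgroup A B := t.prod.left with hf'
    set x' : B := t.prod.right with hx'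
    have hteta : t.prod = (⟨f', x'⟩ : Wreath A B) := rfl
    obtain ⟨w, hw, hwl⟩ := ih (fun g hg => hl g (List.mem_cons_of_mem _ hg)) f' x' hteta
    rcases hl g List.mem_cons_self with hgA | hgB
    · -- lamp generator
      obtain ⟨a, haS, rfl⟩ := hgA
      rw [hteta] at hprod
      have hfe : f = lampSingle A B a * f' := by
        have := congrArg SemidirectProduct.left hprod
        simp only [SemidirectProduct.mul_left, SemidirectProduct.left_inl,
          SemidirectProduct.right_inl] at this
        rw [← this, lampAction_one_apply]
      have hxe : x = x' := by
        have := congrArg SemidirectProduct.right hprod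
        simpa using this.symm
      subst hxe
      refine ⟨w, ?_, ?_⟩
      · intro y hy
        by_cases hy1 : y = 1
        · subst hy1; exact w.start_mem_support
        · apply hw
          have h1 : (f : B → A) y = (f' : B → A) y := by
            rw [hfe, finSupp_coe_mul, lampSingle_apply, if_neg hy1, one_mul]
          rwa [Function.mem_mulSupport, h1] at hy
      · have key := sumLen_apart (SA := SA) f f' 1 (by
          intro y hy
          rw [hfe, finSupp_coe_mul, lampSingle_apply, if_neg hy, one_mul])
        have h1 : wordLength SA ((f : B → A) 1) ≤ 1 + wordLength SA ((f' : B → A) 1) := by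
          have : (f : B → A) 1 = a * (f' : B → A) 1 := by
            rw [hfe, finSupp_coe_mul, lampSingle_apply, if_pos rfl]
          rw [this]
          calc wordLength SA (a * (f' : B → A) 1) ≤
              wordLength SA a + wordLength SA ((f' : B → A) 1) := wordLength_mul_le hSA _ _
            _ ≤ 1 + wordLength SA ((f' : B → A) 1) :=
              Nat.add_le_add_right (wordLength_le_one haS) _
        simp only [List.length_cons]
        omega
    · -- move generator
      obtain ⟨b, hbS, rfl⟩ := hgB
      rw [hteta] at hprod
      have hfe : f = lampAction A B b f' := by
        have := congrArg SemidirectProduct.left hprod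
        simpa using this.symm
      have hxe : x = b * x' := by
        have := congrArg SemidirectProduct.right hprod
        simpa using this.symm
      subst hxe
      by_cases hb : b = 1
      · subst hb
        rw [lampAction_one_apply] at hfe
        subst hfe
        refine ⟨w.copy rfl (one_mul x').symm, ?_, ?_⟩
        · intro y hy
          rw [SimpleGraph.Walk.support_copy]
          exact hw y hy
        · rw [SimpleGraph.Walk.length_copy]
          simp only [List.length_cons]
          omega
      · have e : (cayley SB).Adj 1 b := by
          have h1 : (1 : B) ≠ 1 * b := by simpa using fun h => hb h.symm
          have := cayley_adj_of hbS h1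
          rwa [one_mul] at this
        refine ⟨SimpleGraph.Walk.cons e
          ((w.map (cayleyMulLeft SB b).toHom).copy (show (cayleyMulLeft SB b).toHom 1 = b from mul_one b) rfl), ?_, ?_⟩
        · intro y hy
          have hz : (f' : B → A) (b⁻¹ * y) ≠ 1 := by
            rw [Function.mem_mulSupport, hfe, lampAction_apply] at hy
            exact hy
          have hzin := hw _ hz
          have : y ∈ ((w.map (cayleyMulLeft SB b).toHom).copy (show (cayleyMulLeft SB b).toHom 1 = b from mul_one b) rfl).support := by
            rw [SimpleGraph.Walk.support_copy, SimpleGraph.Walk.support_map]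
            refine List.mem_map.mpr ⟨b⁻¹ * y, hzin, ?_⟩
            show b * (b⁻¹ * y) = y
            rw [mul_inv_cancel_left]
          rw [SimpleGraph.Walk.support_cons]
          exact List.mem_cons_of_mem _ this
        · have hlen2 : ((w.map (cayleyMulLeft SB b).toHom).copy (show (cayleyMulLeft SB b).toHom 1 = b from mul_one b) rfl).length
              = w.length := by
            rw [SimpleGraph.Walk.length_copy, SimpleGraph.Walk.length_map]
          have hsl : sumLen SA f = sumLen SA f' := by
            rw [hfe, sumLen_translate]
          simp only [SimpleGraph.Walk.length_cons, List.length_cons, hlen2, hsl,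
            SimpleGraph.Walk.length_copy, SimpleGraph.Walk.length_map]
          erw [hlen2]
          omega

end Core
section Upper
variable {A B : Type*} [Group A] [Group B] {SA : Set A} {SB : Set B}

lemma upper_core (hSA : IsSymmGen SA) (hSB : IsSymmGen SB) {b x : B}
    (w : (cayley SB).Walk b x) :
    ∀ f : FinSuppSubgroup A B, (∀ y ∈ Function.mulSupport (f : B → A), y ∈ w.support) →
      ∃ l : List (Wreath A B), (∀ g ∈ l, g ∈ stdGen SA SB) ∧
        l.length = sumLen SA f + w.length ∧
        l.prod = (⟨lampAction A B b⁻¹ f, b⁻¹ * x⟩ : Wreath A B) := by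
  induction w with
  | @nil u =>
    intro f hf
    have hsupp : ∀ y, y ≠ u → (f : B → A) y = 1 := by
      intro y hy
      by_contra hne
      have := hf y hne
      simp only [SimpleGraph.Walk.support_nil, List.mem_singleton] at this
      exact hy this
    have hact : lampAction A B u⁻¹ f = lampSingle A B ((f : B → A) u) := by
      apply Subtype.ext
      funext y
      rw [lampAction_apply, lampSingle_apply, inv_inv]
      by_cases hy : y = 1
      · rw [if_pos hy, hy, mul_one]
      · rw [if_neg hy]
        apply hsupp
        intro hcon
        exact hy (by simpa using mul_left_cancel (a := u) (by rw [hcon, mul_one]))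
    obtain ⟨l0, hl0, hlen0, hprod0⟩ := exists_min_word hSA ((f : B → A) u)
    refine ⟨l0.map (singleHom A B), ?_, ?_, ?_⟩
    · intro g hg
      obtain ⟨a, ha, rfl⟩ := List.mem_map.mp hg
      exact Or.inl ⟨a, hl0 a ha, rfl⟩
    · rw [List.length_map, hlen0, SimpleGraph.Walk.length_nil, Nat.add_zero]
      congr 1
      rw [sumLen_eq_sum SA f {u} (fun y hy => by
        by_contra hc
        exact hy (hsupp y (by simpa using hc)))]
      rw [Finset.sum_singleton]
    · rw [← map_list_prod (singleHom A B) l0, hprod0]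
      show SemidirectProduct.inl (lampSingle A B ((f : B → A) u)) = _
      rw [← hact]
      have : u⁻¹ * u = 1 := inv_mul_cancel u
      exact congrArg₂ (fun g y => (⟨g, y⟩ : Wreath A B)) rfl this.symm
  | @cons u v x h p ih =>
    intro f hf
    obtain ⟨hne, s, hsS, hv⟩ := (cayley_adj_iff hSB).mp h
    classical
    have hfin : (Function.mulSupport
        (fun y => if y = u then 1 else (f : B → A) y)).Finite := by
      apply Set.Finite.subset (finSupp_finite f)
      intro y hy
      rw [Function.mem_mulSupport] at hy ⊢
      intro hc
      apply hy
      rw [hc]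
      simp
    set f' : FinSuppSubgroup A B := ⟨fun y => if y = u then 1 else (f : B → A) y, hfin⟩
      with hf'def
    have hf'app : ∀ y, (f' : B → A) y = if y = u then 1 else (f : B → A) y := fun y => rfl
    have hf' : ∀ y ∈ Function.mulSupport (f' : B → A), y ∈ p.support := by
      intro y hy
      rw [Function.mem_mulSupport, hf'app] at hy
      by_cases hyu : y = u
      · rw [if_pos hyu] at hy; exact absurd rfl hy
      · rw [if_neg hyu] at hy
        have := hf y hy
        rw [SimpleGraph.Walk.support_cons, List.mem_cons] at this
        rcases this with h1 | h1
        · exact absurd h1 hyu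
        · exact h1
    obtain ⟨l', hmem', hlen', hprod'⟩ := ih f' hf'
    obtain ⟨l0, hl0, hlen0, hprod0⟩ := exists_min_word hSA ((f : B → A) u)
    refine ⟨l0.map (singleHom A B) ++ (SemidirectProduct.inr s :: l'), ?_, ?_, ?_⟩
    · intro g hg
      rcases List.mem_append.mp hg with h1 | h1
      · obtain ⟨a, ha, rfl⟩ := List.mem_map.mp h1
        exact Or.inl ⟨a, hl0 a ha, rfl⟩
      · rcases List.mem_cons.mp h1 with rfl | h1
        · exact Or.inr ⟨s, hsS, rfl⟩
        · exact hmem' g h1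
    · have hsplit : sumLen SA f = wordLength SA ((f : B → A) u) + sumLen SA f' := by
        have := sumLen_apart (SA := SA) f f' u (fun y hy => by rw [hf'app, if_neg hy])
        have hz : (f' : B → A) u = 1 := by rw [hf'app, if_pos rfl]
        rw [hz, wordLength_one] at this
        omega
      simp only [List.length_append, List.length_map, List.length_cons,
        SimpleGraph.Walk.length_cons, hlen0, hlen', hsplit]
      omega
    · rw [List.prod_append, List.prod_cons, hprod',
        ← map_list_prod (singleHom A B) l0, hprod0]
      show SemidirectProduct.inl (lampSingle A B ((f : B → A) u)) *
        (SemidirectProduct.inr s * (⟨lampAction A B v⁻¹ f', v⁻¹ * x⟩ : Wreath A B)) = _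
      have hsv : s * v⁻¹ = u⁻¹ := by rw [hv]; group
      have step1 : SemidirectProduct.inr (φ := lampAction A B) s *
          (⟨lampAction A B v⁻¹ f', v⁻¹ * x⟩ : Wreath A B) =
          (⟨lampAction A B u⁻¹ f', u⁻¹ * x⟩ : Wreath A B) := by
        refine congrArg₂ (fun g y => (⟨g, y⟩ : Wreath A B)) ?_ ?_
        · show (1 : FinSuppSubgroup A B) * lampAction A B s (lampAction A B v⁻¹ f') = _
          rw [one_mul, ← MulAut.mul_apply, ← map_mul, hsv]
        · show s * (v⁻¹ * x) = u⁻¹ * x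
          rw [← mul_assoc, hsv]
      rw [step1]
      refine congrArg₂ (fun g y => (⟨g, y⟩ : Wreath A B)) ?_ ?_
      · show lampSingle A B ((f : B → A) u) * lampAction A B 1 (lampAction A B u⁻¹ f') = _
        rw [lampAction_one_apply]
        apply Subtype.ext
        funext y
        rw [finSupp_coe_mul, lampSingle_apply, lampAction_apply, lampAction_apply, inv_inv,
          hf'app]
        by_cases hy : y = 1
        · rw [if_pos hy, hy, mul_one, if_pos rfl, mul_one]
        · rw [if_neg hy, one_mul, if_neg (fun hc : u * y = u =>
            hy (by simpa using mul_left_cancel (a := u) (by rw [hc, mul_one])))]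
      · show 1 * (u⁻¹ * x) = u⁻¹ * x
        rw [one_mul]
end Upper
/-- The word length of `g = (f, x) ∈ A ≀ B` with respect to the standard generating set:
the sum of the word lengths of the lamp states plus the length of an optimal traveling
salesperson tour from `1` through `supp f` ending at `x`. -/
theorem wreath_wordLength_eq {A B : Type*} [Group A] [Group B]
    (SA : Set A) (SB : Set B) (hSA : IsSymmGen SA) (hSB : IsSymmGen SB)
    (f : FinSuppSubgroup A B) (x : B) :
    wordLength (stdGen SA SB) (⟨f, x⟩ : Wreath A B) =
      (∑ y ∈ (finSupp_finite f).toFinset, wordLength SA ((f : B → A) y)) +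
        TS SB 1 x (Function.mulSupport (f : B → A)) := by
  show wordLength (stdGen SA SB) (⟨f, x⟩ : Wreath A B) =
    sumLen SA f + TS SB 1 x (Function.mulSupport (f : B → A))
  -- a walk visiting the support exists
  have hTne : {n | ∃ w : (cayley SB).Walk 1 x,
      (∀ y ∈ Function.mulSupport (f : B → A), y ∈ w.support) ∧ w.length = n}.Nonempty := by
    obtain ⟨w0, hw0⟩ := exists_walk_visiting hSB (finSupp_finite f).toFinset.toList 1 x
    refine ⟨w0.length, w0, ?_, rfl⟩
    intro y hy
    exact hw0 y (Finset.mem_toList.mpr ((finSupp_finite f).mem_toFinset.mpr hy))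
  obtain ⟨wopt, hvis, hlenopt⟩ := Nat.sInf_mem hTne
  -- upper bound word
  obtain ⟨l, hmem, hlen, hprod⟩ := upper_core hSA hSB wopt f hvis
  have hprod2 : l.prod = (⟨f, x⟩ : Wreath A B) := by
    rw [hprod]
    exact congrArg₂ (fun g y => (⟨g, y⟩ : Wreath A B))
      (by rw [inv_one, lampAction_one_apply]) (by rw [inv_one, one_mul])
  have le1 : wordLength (stdGen SA SB) (⟨f, x⟩ : Wreath A B) ≤
      sumLen SA f + TS SB 1 x (Function.mulSupport (f : B → A)) := by
    have := wordLength_le l hmem hprod2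
    rwa [hlen, hlenopt] at this
  refine le_antisymm le1 (le_csInf ⟨l.length, l, hmem, rfl, hprod2⟩ ?_)
  rintro n ⟨l', hl', rfl, hp'⟩
  obtain ⟨w, hw, hwl⟩ := lower_core hSA l' hl' f x hp'
  have hts : TS SB 1 x (Function.mulSupport (f : B → A)) ≤ w.length :=
    Nat.sInf_le ⟨w, hw, rfl⟩
  omega
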